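/- Let α be irrational with denominators (q_n) and let β be a real number. If there exists n₀ such that for all n ≥ n₀, min_{0 ≤ |j| < q_n} ‖β − jα‖ < (1/2)‖q_{n+1}α‖, then β ∈ ℤα + ℤ. -/

import Mathlib

/-- Denominators of the continued fraction convergents of a real number. -/
noncomputable def contDen (α : ℝ) (n : ℕ) : ℝ := (GenContFract.of α).dens n

/-- Distance from a real number to the nearest integer. -/
noncomputable def nint (x : ℝ) : ℝ := |x - (round x : ℝ)|

/-- `α` is of bounded type: the partial quotients in its continued fraction expansion
are bounded. -/
def BoundedType (α : ℝ) : Prop :=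
  ∃ M : ℝ, ∀ n : ℕ, ∀ b : ℝ, (GenContFract.of α).partDens.get? n = some b → b ≤ M

/-- Membership in the subgroup ℤα + ℤ of ℝ. -/
def InZalphaZ (α β : ℝ) : Prop := ∃ m k : ℤ, β = (m : ℝ) * α + (k : ℝ)


/-- Integer denominator sequence built from partial quotients `b`. -/
def recQ (b : ℕ → ℤ) : ℕ → ℤ
  | 0 => 1
  | 1 => b 1
  | (n+2) => b (n+2) * recQ b (n+1) + recQ b n

/-- Integer numerator sequence built from partial quotients `b` (for `α ∈ (0,1)`). -/
def recP (b : ℕ → ℤ) : ℕ → ℤ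
  | 0 => 0
  | 1 => 1
  | (n+2) => b (n+2) * recP b (n+1) + recP b n

lemma recQ_pos (b : ℕ → ℤ) (hb : ∀ n, 1 ≤ b (n+1)) : ∀ n, 1 ≤ recQ b n := by
  intro n
  induction n using Nat.strong_induction_on with
  | _ n ih =>
    match n with
    | 0 => simp [recQ]
    | 1 => simpa [recQ] using hb 0
    | (n+2) =>
      have h1 := ih (n+1) (by omega)
      have h2 := ih n (by omega)
      have := hb (n+1)
      simp only [recQ]
      nlinarith

lemma recQ_ge (b : ℕ → ℤ) (hb : ∀ n, 1 ≤ b (n+1)) : ∀ n : ℕ, (n : ℤ) ≤ recQ b n := by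
  intro n
  induction n using Nat.strong_induction_on with
  | _ n ih =>
    match n with
    | 0 => simp [recQ]
    | 1 => simpa [recQ] using hb 0
    | (n+2) =>
      have h1 := ih (n+1) (by omega)
      have h2 := recQ_pos b hb n
      have h3 := recQ_pos b hb (n+1)
      have h4 := hb (n+1)
      have h5 : recQ b (n+1) ≤ b (n+2) * recQ b (n+1) :=
        le_mul_of_one_le_left (by linarith) h4
      simp only [recQ]
      push_cast
      push_cast at h1
      linarith

lemma recQ_add_le (b : ℕ → ℤ) (hb : ∀ n, 1 ≤ b (n+1)) (n : ℕ) :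
    recQ b n + recQ b (n+1) ≤ recQ b (n+2) := by
  have h1 := recQ_pos b hb (n+1)
  have := hb (n+1)
  simp only [recQ]
  nlinarith

lemma recPQ_det (b : ℕ → ℤ) :
    ∀ n, recP b (n+1) * recQ b n - recP b n * recQ b (n+1) = (-1)^n := by
  intro n
  induction n with
  | zero => simp [recP, recQ]
  | succ n ih =>
    show recP b (n+2) * recQ b (n+1) - recP b (n+1) * recQ b (n+2) = (-1)^(n+1)
    simp only [recP, recQ]
    linear_combination (-1 : ℤ) * ih

open GenContFract in
lemma setup (α : ℝ) (hα : Irrational α) (hα01 : α ∈ Set.Ioo (0:ℝ) 1) :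
    ∃ (b : ℕ → ℤ) (fr : ℕ → ℝ),
      (∀ n, 1 ≤ b (n+1)) ∧
      (∀ n, (GenContFract.of α).dens n = (recQ b n : ℝ)) ∧
      (∀ n, 0 < fr n ∧ fr n < 1) ∧
      (∀ n, (fr n)⁻¹ = b (n+1) + fr (n+1)) ∧
      (∀ n, (recQ b (n+1) : ℝ) * α - recP b (n+1)
         = (-1)^(n+1) / ((fr (n+1))⁻¹ * recQ b (n+1) + recQ b n)) := by
  have not_term : ∀ n, ¬(GenContFract.of α).TerminatedAt n := by
    intro n hterm
    obtain ⟨q, hq⟩ := (terminates_iff_rat α).mp ⟨n, hterm⟩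
    exact hα ⟨q, hq.symm⟩
  have hstream : ∀ n, ∃ ifp, IntFractPair.stream α n = some ifp := by
    intro n
    match n with
    | 0 => exact ⟨_, IntFractPair.stream_zero α⟩
    | (n+1) =>
      refine Option.ne_none_iff_exists'.mp ?_
      intro hnone
      exact not_term n (of_terminatedAt_n_iff_succ_nth_intFractPair_stream_eq_none.mpr hnone)
  choose ifp hifp using hstream
  set b : ℕ → ℤ := fun n => (ifp n).b with hbdef
  set fr : ℕ → ℝ := fun n => (ifp n).fr with hfrdef
  have frne : ∀ n, fr n ≠ 0 := by
    intro n h0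
    have := IntFractPair.stream_eq_none_of_fr_eq_zero (hifp n) h0
    rw [hifp (n+1)] at this
    exact Option.some_ne_none _ this
  have fr01 : ∀ n, 0 < fr n ∧ fr n < 1 := by
    intro n
    obtain ⟨h1, h2⟩ := IntFractPair.nth_stream_fr_nonneg_lt_one (hifp n)
    exact ⟨lt_of_le_of_ne h1 (Ne.symm (frne n)), h2⟩
  have hsucc : ∀ n, IntFractPair.of (fr n)⁻¹ = ifp (n+1) := by
    intro n
    have h1 := IntFractPair.stream_succ_of_some (hifp n) (frne n)
    rw [hifp (n+1)] at h1
    exact (Option.some_inj.mp h1).symm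
  have hb : ∀ n, 1 ≤ b (n+1) := fun n =>
    IntFractPair.one_le_succ_nth_stream_b (hifp (n+1))
  have hinv : ∀ n, (fr n)⁻¹ = b (n+1) + fr (n+1) := by
    intro n
    have h1 : b (n+1) = ⌊(fr n)⁻¹⌋ := congrArg IntFractPair.b (hsucc n).symm
    have h2 : fr (n+1) = Int.fract (fr n)⁻¹ := congrArg IntFractPair.fr (hsucc n).symm
    rw [h1, h2, Int.fract]; ring
  have hs : ∀ n, (GenContFract.of α).s.get? n = some ⟨1, (b (n+1) : ℝ)⟩ := fun n =>
    get?_of_eq_some_of_succ_get?_intFractPair_stream (hifp (n+1))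
  have h0 : (GenContFract.of α).h = 0 := by
    have hfl : ⌊α⌋ = 0 := Int.floor_eq_zero_iff.mpr (Set.mem_Ico.mpr ⟨hα01.1.le, hα01.2⟩)
    rw [of_h_eq_floor, hfl]
    norm_num
  have key : ∀ n, (GenContFract.of α).dens n = (recQ b n : ℝ)
      ∧ (GenContFract.of α).nums n = (recP b n : ℝ) := by
    intro n
    induction n using Nat.strong_induction_on with
    | _ n ih =>
      match n with
      | 0 => exact ⟨by simp [zeroth_den_eq_one, recQ], by rw [zeroth_num_eq_h, h0]; simp [recP]⟩
      | 1 =>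
        constructor
        · rw [first_den_eq (hs 0)]; simp [recQ]
        · rw [first_num_eq (hs 0), h0]; simp [recP]
      | (n+2) =>
        obtain ⟨hd1, hn1⟩ := ih (n+1) (by omega)
        obtain ⟨hd0, hn0⟩ := ih n (by omega)
        constructor
        · rw [dens_recurrence (hs (n+1)) hd0 hd1]
          show ((b (n+2) : ℝ)) * _ + 1 * _ = _
          push_cast [recQ]; ring
        · rw [nums_recurrence (hs (n+1)) hn0 hn1]
          show ((b (n+2) : ℝ)) * _ + 1 * _ = _
          push_cast [recP]; ring
  refine ⟨b, fr, hb, fun n => (key n).1, fr01, hinv, ?_⟩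
  intro n
  have hQpos : ∀ k, (0:ℝ) < (recQ b k : ℝ) := by
    intro k; exact_mod_cast lt_of_lt_of_le zero_lt_one (recQ_pos b hb k)
  have hfrpos : 0 < (fr (n+1))⁻¹ := inv_pos.mpr (fr01 (n+1)).1
  have hden : (0:ℝ) < (fr (n+1))⁻¹ * recQ b (n+1) + recQ b n :=
    add_pos (mul_pos hfrpos (hQpos (n+1))) (hQpos n)
  have hQne : ((recQ b (n+1) : ℝ)) ≠ 0 := ne_of_gt (hQpos (n+1))
  have h1 := sub_convs_eq (hifp (n+1))
  simp only [frne (n+1), if_false] at h1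
  have e1 : ((GenContFract.of α).contsAux (n+2)).b = (GenContFract.of α).dens (n+1) := rfl
  have e2 : ((GenContFract.of α).contsAux (n+1)).b = (GenContFract.of α).dens n := rfl
  rw [e1, e2, (key (n+1)).1, (key n).1, show (ifp (n+1)).fr = fr (n+1) from rfl] at h1
  have h2 : (recQ b (n+1) : ℝ) * α - recP b (n+1)
      = (recQ b (n+1) : ℝ) * (α - (GenContFract.of α).convs (n+1)) := by
    rw [conv_eq_num_div_den, (key (n+1)).1, (key (n+1)).2]
    field_simp
  rw [h2, h1, if_neg (frne (n+1)), mul_div_assoc', mul_div_mul_left _ _ hQne]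

lemma abs_le_abs_add_of_mul_nonneg (a c : ℝ) (h : 0 ≤ a * c) : |a| ≤ |a + c| := by
  rcases abs_cases a with ⟨h1, h2⟩ | ⟨h1, h2⟩ <;>
    rcases abs_cases (a + c) with ⟨h3, h4⟩ | ⟨h3, h4⟩ <;> nlinarith

lemma nint_le (x : ℝ) (k : ℤ) : nint x ≤ |x - k| := round_le x k

lemma nint_sub_le (x y : ℝ) : nint (x - y) ≤ nint x + nint y := by
  calc nint (x - y) ≤ |x - y - ((round x - round y : ℤ) : ℝ)| := nint_le _ _
    _ = |(x - round x) - (y - round y)| := by push_cast; ring_nf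
    _ ≤ |x - (round x : ℝ)| + |y - (round y : ℝ)| := abs_sub _ _
    _ = nint x + nint y := rfl

theorem stmt8 (α : ℝ) (hα : Irrational α) (hα01 : α ∈ Set.Ioo (0:ℝ) 1) (β : ℝ)
    (h : ∃ n₀ : ℕ, ∀ n ≥ n₀, ∃ j : ℤ, (|j| : ℝ) < contDen α n ∧
      nint (β - (j : ℝ) * α) < (1/2) * nint (contDen α (n+1) * α)) :
    InZalphaZ α β := by
  obtain ⟨n₀, h⟩ := h
  obtain ⟨b, fr, hb, hdens, hfr, hinv, hδ⟩ := setup α hα hα01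
  have hQ1 : ∀ n, 1 ≤ recQ b n := recQ_pos b hb
  have hQpos : ∀ k, (0:ℝ) < (recQ b k : ℝ) := by
    intro k; exact_mod_cast lt_of_lt_of_le zero_lt_one (hQ1 k)
  set δ : ℕ → ℝ := fun n => (recQ b n : ℝ) * α - recP b n with hδdef
  set E : ℕ → ℝ := fun n => (fr (n+1))⁻¹ * recQ b (n+1) + recQ b n with hEdef
  have hδeq : ∀ n, δ (n+1) = (-1)^(n+1) / E n := fun n => hδ n
  have hfrpos : ∀ n, 0 < (fr n)⁻¹ := fun n => inv_pos.mpr (hfr n).1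
  have hfrgt : ∀ n, 1 < (fr n)⁻¹ := fun n => (one_lt_inv₀ (hfr n).1).mpr (hfr n).2
  have hEpos : ∀ n, 0 < E n := fun n =>
    add_pos (mul_pos (hfrpos (n+1)) (hQpos (n+1))) (hQpos n)
  have habsδ : ∀ n, |δ (n+1)| = 1 / E n := by
    intro n
    rw [hδeq n, abs_div, abs_pow, abs_neg, abs_one, one_pow, abs_of_pos (hEpos n)]
  have hEeq : ∀ n, E n = (recQ b (n+2) : ℝ) + fr (n+2) * recQ b (n+1) := by
    intro n
    show (fr (n+1))⁻¹ * recQ b (n+1) + recQ b n = _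
    rw [hinv (n+1)]
    push_cast [show recQ b (n+2) = b (n+2) * recQ b (n+1) + recQ b n from rfl]
    ring
  have hEmono : ∀ n, E n < E (n+1) := by
    intro n
    rw [hEeq n]
    have e1 : E (n+1) = (fr (n+2))⁻¹ * recQ b (n+2) + recQ b (n+1) := rfl
    rw [e1]
    have h1 := hfrgt (n+2)
    have h2 := (hfr (n+2)).2
    have h3 := hQpos (n+1)
    have h4 := hQpos (n+2)
    nlinarith
  have hEQ : ∀ n, (recQ b (n+2) : ℝ) ≤ E n := by
    intro n
    rw [hEeq n]
    nlinarith [(hfr (n+2)).1, hQpos (n+1)]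
  have hδmono : ∀ n, |δ (n+2)| < |δ (n+1)| := by
    intro n
    rw [habsδ, habsδ]
    exact one_div_lt_one_div_of_lt (hEpos n) (hEmono n)
  have hδle : ∀ n, |δ (n+1)| ≤ 1 / (recQ b (n+2) : ℝ) := by
    intro n
    rw [habsδ]
    exact one_div_le_one_div_of_le (hQpos (n+2)) (hEQ n)
  have hsign : ∀ n, δ (n+1) * δ (n+2) < 0 := by
    intro n
    rw [hδeq n, hδeq (n+1), div_mul_div_comm, ← pow_add]
    apply div_neg_of_neg_of_pos
    · have hodd : Odd (n + 1 + (n + 2)) := ⟨n + 1, by ring⟩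
      rw [hodd.neg_one_pow]; norm_num
    · exact mul_pos (hEpos n) (hEpos (n+1))
  have hnintQ : ∀ n, nint ((recQ b (n+1) : ℝ) * α) ≤ |δ (n+1)| := fun n =>
    nint_le _ (recP b (n+1))
  -- the best approximation property
  have hBA : ∀ n, ∀ m p : ℤ, m ≠ 0 → |m| < recQ b (n+2) →
      |δ (n+1)| ≤ |(m : ℝ) * α - p| := by
    intro n m p hm0 hmlt
    have hdet := recPQ_det b (n+1)
    have hd : ((-1:ℤ))^(n+1) * (-1)^(n+1) = 1 := by
      rw [← pow_add]
      exact Even.neg_one_pow ⟨n+1, by ring⟩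
    set x : ℤ := (-1)^(n+1) * (m * recP b (n+2) - p * recQ b (n+2)) with hxdef
    set y : ℤ := (-1)^(n+1) * (p * recQ b (n+1) - m * recP b (n+1)) with hydef
    have hx : x * recQ b (n+1) + y * recQ b (n+2) = m := by
      rw [hxdef, hydef]
      linear_combination (m * (-1:ℤ)^(n+1)) * hdet + m * hd
    have hy : x * recP b (n+1) + y * recP b (n+2) = p := by
      rw [hxdef, hydef]
      linear_combination (p * (-1:ℤ)^(n+1)) * hdet + p * hd
    have hxR : ((x:ℝ)) * recQ b (n+1) + (y:ℝ) * recQ b (n+2) = (m:ℝ) := by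
      exact_mod_cast congrArg (Int.cast : ℤ → ℝ) hx
    have hyR : ((x:ℝ)) * recP b (n+1) + (y:ℝ) * recP b (n+2) = (p:ℝ) := by
      exact_mod_cast congrArg (Int.cast : ℤ → ℝ) hy
    have hsum : (m : ℝ) * α - p = (x:ℝ) * δ (n+1) + (y:ℝ) * δ (n+2) := by
      show _ = (x:ℝ) * ((recQ b (n+1) : ℝ) * α - recP b (n+1))
        + (y:ℝ) * ((recQ b (n+2) : ℝ) * α - recP b (n+2))
      linear_combination α * hxR.symm - hyR.symm
    have hmb := abs_lt.mp hmlt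
    by_cases hy0 : y = 0
    · have hx0 : x ≠ 0 := by
        intro hx0
        apply hm0
        rw [← hx, hx0, hy0]; ring
      have h1 : (1:ℝ) ≤ |(x:ℝ)| := by exact_mod_cast Int.one_le_abs hx0
      rw [hsum, hy0]
      push_cast
      rw [zero_mul, add_zero, abs_mul]
      nlinarith [abs_nonneg (δ (n+1))]
    · by_cases hx0 : x = 0
      · exfalso
        have hm : m = y * recQ b (n+2) := by rw [← hx, hx0]; ring
        have h2 : recQ b (n+2) ≤ |m| := by
          rw [hm, abs_mul, abs_of_pos (lt_of_lt_of_le zero_lt_one (hQ1 (n+2)))]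
          nlinarith [Int.one_le_abs hy0, hQ1 (n+2)]
        linarith [abs_lt.mp hmlt]
      · have hxyneg : x * y < 0 := by
          rcases lt_trichotomy x 0 with hxs | hxs | hxs
          · rcases lt_trichotomy y 0 with hys | hys | hys
            · exfalso
              have hx1 : x ≤ -1 := by omega
              have hy1 : y ≤ -1 := by omega
              have h1 := hQ1 (n+1)
              have h2 := hQ1 (n+2)
              nlinarith [hx, hmb.1]
            · exact absurd hys hy0
            · exact mul_neg_of_neg_of_pos hxs hys
          · exact absurd hxs hx0
          · rcases lt_trichotomy y 0 with hys | hys | hys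
            · rw [mul_comm]; exact mul_neg_of_neg_of_pos hys hxs
            · exact absurd hys hy0
            · exfalso
              have hx1 : 1 ≤ x := hxs
              have hy1 : 1 ≤ y := hys
              have h1 := hQ1 (n+1)
              have h2 := hQ1 (n+2)
              nlinarith [hx, hmb.2]
        have hprod : 0 ≤ ((x:ℝ) * δ (n+1)) * ((y:ℝ) * δ (n+2)) := by
          have h1 : ((x:ℝ)) * (y:ℝ) < 0 := by exact_mod_cast hxyneg
          nlinarith [hsign n]
        rw [hsum]
        calc |δ (n+1)| ≤ |(x:ℝ)| * |δ (n+1)| :=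
              le_mul_of_one_le_left (abs_nonneg _) (by exact_mod_cast Int.one_le_abs hx0)
          _ = |(x:ℝ) * δ (n+1)| := (abs_mul _ _).symm
          _ ≤ |(x:ℝ) * δ (n+1) + (y:ℝ) * δ (n+2)| := abs_le_abs_add_of_mul_nonneg _ _ hprod
  -- extract the j's
  choose! j hj1 hj2 using h
  have hj1' : ∀ n, n ≥ n₀ → |j n| < recQ b n := by
    intro n hn
    have := hj1 n hn
    rw [contDen, hdens n] at this
    exact_mod_cast this
  have hj2' : ∀ n, n ≥ n₀ →
      nint (β - (j n : ℝ) * α) < (1/2) * nint ((recQ b (n+1) : ℝ) * α) := by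
    intro n hn
    have := hj2 n hn
    rwa [contDen, hdens (n+1)] at this
  -- the j's are eventually constant
  have hstep : ∀ n, n ≥ n₀ → j (n+1) = j n := by
    intro n hn
    by_contra hne
    have hm0 : j (n+1) - j n ≠ 0 := sub_ne_zero.mpr hne
    have hmlt : |j (n+1) - j n| < recQ b (n+2) := by
      calc |j (n+1) - j n| ≤ |j (n+1)| + |j n| := abs_sub _ _
        _ < recQ b (n+1) + recQ b n := by
            have := hj1' (n+1) (by omega)
            have := hj1' n hn
            omega
        _ ≤ recQ b (n+2) := by have := recQ_add_le b hb n; linarith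
    have h1 : |δ (n+1)| ≤ nint (((j (n+1) - j n : ℤ) : ℝ) * α) := by
      have := hBA n (j (n+1) - j n) (round (((j (n+1) - j n : ℤ) : ℝ) * α)) hm0 hmlt
      exact this
    have h2 : nint (((j (n+1) - j n : ℤ) : ℝ) * α)
        ≤ nint (β - (j n : ℝ) * α) + nint (β - (j (n+1) : ℝ) * α) := by
      have he : ((j (n+1) - j n : ℤ) : ℝ) * α
          = (β - (j n : ℝ) * α) - (β - (j (n+1) : ℝ) * α) := by push_cast; ring
      rw [he]
      exact nint_sub_le _ _
    have h3 := hj2' n hn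
    have h4 := hj2' (n+1) (by omega)
    have h5 := hnintQ n
    have h6 := hnintQ (n+1)
    have h7 := hδmono n
    linarith
  have hconst : ∀ n, n ≥ n₀ → j n = j n₀ := by
    intro n hn
    induction n, hn using Nat.le_induction with
    | base => rfl
    | succ n hn ih => rw [hstep n hn, ih]
  -- conclude
  have hsmall : ∀ n, n ≥ n₀ → nint (β - (j n₀ : ℝ) * α) < 1 / (recQ b (n+2) : ℝ) := by
    intro n hn
    have h3 := hj2' n hn
    rw [hconst n hn] at h3
    have h5 := hnintQ n
    have h6 := hδle n
    have h7 : (0:ℝ) < 1 / (recQ b (n+2) : ℝ) := one_div_pos.mpr (hQpos (n+2))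
    linarith
  have hzero : nint (β - (j n₀ : ℝ) * α) = 0 := by
    by_contra hne
    have hpos : 0 < nint (β - (j n₀ : ℝ) * α) :=
      lt_of_le_of_ne (abs_nonneg _) (Ne.symm hne)
    obtain ⟨N, hN⟩ := exists_nat_gt (1 / nint (β - (j n₀ : ℝ) * α))
    have hn : N + n₀ ≥ n₀ := by omega
    have h1 := hsmall (N + n₀) hn
    have h2 : (recQ b (N + n₀ + 2) : ℝ) ≥ ((N + n₀ + 2 : ℕ) : ℝ) := by
      exact_mod_cast recQ_ge b hb (N + n₀ + 2)
    have h3 : ((N + n₀ + 2 : ℕ) : ℝ) ≥ (N : ℝ) := by push_cast; linarith [Nat.cast_nonneg (α := ℝ) n₀]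
    have h4 : (0:ℝ) < N := lt_trans (by positivity) hN
    have h5 : 1 / (recQ b (N + n₀ + 2) : ℝ) ≤ 1 / (N : ℝ) := by
      apply one_div_le_one_div_of_le h4
      linarith
    have h6 : 1 / (N : ℝ) < nint (β - (j n₀ : ℝ) * α) := by
      rw [one_div] at hN ⊢
      exact (inv_lt_comm₀ h4 hpos).mpr hN
    linarith
  refine ⟨j n₀, round (β - (j n₀ : ℝ) * α), ?_⟩
  have := abs_eq_zero.mp hzero
  linarith [this]
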